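/- Let α ∈ ℂ, let a_{ij} ∈ ℂ be given for indices with i + 2j ≥ 5 and i + j ≤ 4, and let Ψ(x, y, z, s) be a polynomial that is homogeneous of degree 4 in x, y, z. For s ∈ ℂ define f_s(x, y, z) = (yz + α·x²)² + Σ_{i+2j ≥ 5} a_{ij} x^i y^j z^{4-i-j} + s·Ψ(x, y, z, s). Then the expression g(t, x, y, z) = f_{t⁵}(x, t·y, t⁻¹·z), a priori a Laurent polynomial in t, is a genuine polynomial in ℂ[x, y, z, t], and g(0, x, y, z) = (yz + α·x²)². (Hence every such one-parameter family of semistable plane quartics degenerating to an inadmissible quartic is equivalent to one degenerating to the double conic (yz + α·x²)² = 0.) -/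

import Mathlib

open MvPolynomial Finset

noncomputable def expMap18 (m : Fin 4 →₀ ℕ) : Fin 4 →₀ ℕ :=
  Finsupp.equivFunOnFinite.symm ![m 0, m 1, m 2, 5 + m 1 + 5 * m 3 - m 2]

/-- Let `α ∈ ℂ`, let `a_{ij} ∈ ℂ` be given for indices with
`i + 2j ≥ 5` and `i + j ≤ 4`, and let `Ψ(x, y, z, s)` be a polynomial homogeneous of degree
`4` in `x, y, z` (the variables `X 0, X 1, X 2`; `s` is `X 3`).  For `s ∈ ℂ` let
`f_s(x, y, z) = (yz + α·x²)² + Σ_{i+2j ≥ 5} a_{ij} x^i y^j z^{4-i-j} + s·Ψ(x, y, z, s)`.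
Then `g(t, x, y, z) = f_{t⁵}(x, t·y, t⁻¹·z)`, a priori a Laurent polynomial in `t`, is a
genuine polynomial `G ∈ ℂ[x, y, z, t]`, and `g(0, x, y, z) = (yz + α·x²)²`.  (Hence every
such one-parameter family of semistable plane quartics degenerating to an inadmissible
quartic is equivalent to one degenerating to the double conic `(yz + α·x²)² = 0`.) -/
theorem stmt18 (α : ℂ) (a : ℕ → ℕ → ℂ) (Ψ : MvPolynomial (Fin 4) ℂ)
    (hΨ : ∀ m ∈ Ψ.support, m 0 + m 1 + m 2 = 4) :
    ∃ G : MvPolynomial (Fin 4) ℂ,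
      (∀ t x y z : ℂ, t ≠ 0 →
        MvPolynomial.eval ![x, y, z, t] G =
          (t * y * (t⁻¹ * z) + α * x ^ 2) ^ 2 +
          ∑ p ∈ (Finset.range 5 ×ˢ Finset.range 5).filter
              (fun p => 5 ≤ p.1 + 2 * p.2 ∧ p.1 + p.2 ≤ 4),
            a p.1 p.2 * x ^ p.1 * (t * y) ^ p.2 * (t⁻¹ * z) ^ (4 - p.1 - p.2) +
          t ^ 5 * MvPolynomial.eval ![x, t * y, t⁻¹ * z, t ^ 5] Ψ) ∧
      (∀ x y z : ℂ,
        MvPolynomial.eval ![x, y, z, 0] G = (y * z + α * x ^ 2) ^ 2) := by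
  classical
  set S := (Finset.range 5 ×ˢ Finset.range 5).filter
      (fun p : ℕ × ℕ => 5 ≤ p.1 + 2 * p.2 ∧ p.1 + p.2 ≤ 4) with hS
  refine ⟨(X 1 * X 2 + C α * X 0 ^ 2) ^ 2
      + ∑ p ∈ S, C (a p.1 p.2) * X 0 ^ p.1 * X 1 ^ p.2 * X 2 ^ (4 - p.1 - p.2)
          * X 3 ^ (p.1 + 2 * p.2 - 4)
      + ∑ m ∈ Ψ.support, monomial (expMap18 m) (Ψ.coeff m), ?_, ?_⟩
  · intro t x y z ht
    simp only [map_add, map_pow, map_mul, map_sum, eval_X, eval_C, eval_monomial,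
      Matrix.cons_val_zero, Matrix.cons_val_one, Matrix.head_cons,
      Matrix.cons_val_two, Matrix.tail_cons, Matrix.cons_val_three]
    congr 1
    · congr 1
      · rw [show t * y * (t⁻¹ * z) = y * z by field_simp]
      · refine Finset.sum_congr rfl ?_
        rintro ⟨i, j⟩ hp
        simp only [hS, Finset.mem_filter, Finset.mem_product, Finset.mem_range] at hp
        obtain ⟨⟨hi, hj⟩, h1, h2⟩ := hp
        simp only [Matrix.cons_val_zero, Matrix.cons_val_one, Matrix.head_cons,
          Matrix.cons_val_two, Matrix.tail_cons, Matrix.cons_val_three]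
        have key : t ^ (i + 2 * j - 4) * t ^ (4 - i - j) = t ^ j := by
          rw [← pow_add]; congr 1; omega
        have hinv : t ^ (4 - i - j) * (t ^ (4 - i - j))⁻¹ = 1 := mul_inv_cancel₀ (pow_ne_zero _ ht)
        rw [mul_pow, mul_pow, inv_pow, ← key]
        linear_combination (-(a i j * x ^ i * y ^ j * z ^ (4 - i - j) * t ^ (i + 2 * j - 4))) * hinv
    · rw [eval_eq', Finset.mul_sum]
      refine Finset.sum_congr rfl ?_
      intro m hm
      have h4 := hΨ m hm
      rw [Finsupp.prod_fintype _ _ (fun i => pow_zero _), Fin.prod_univ_four,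
        Fin.prod_univ_four]
      have hexp : ∀ i : Fin 4, expMap18 m i = ![m 0, m 1, m 2, 5 + m 1 + 5 * m 3 - m 2] i :=
        fun i => rfl
      simp only [hexp, Matrix.cons_val_zero, Matrix.cons_val_one, Matrix.head_cons,
        Matrix.cons_val_two, Matrix.tail_cons, Matrix.cons_val_three]
      have htE : t ^ (5 + m 1 + 5 * m 3 - m 2) =
          t ^ 5 * t ^ (m 1) * (t ^ 5) ^ (m 3) * (t ^ (m 2))⁻¹ := by
        rw [eq_mul_inv_iff_mul_eq₀ (pow_ne_zero _ ht), ← pow_mul, ← pow_add, ← pow_add,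
          ← pow_add]
        congr 1; omega
      rw [htE, mul_pow, mul_pow, inv_pow]
      ring
  · intro x y z
    simp only [map_add, map_pow, map_mul, map_sum, eval_X, eval_C, eval_monomial,
      Matrix.cons_val_zero, Matrix.cons_val_one, Matrix.head_cons,
      Matrix.cons_val_two, Matrix.tail_cons, Matrix.cons_val_three]
    have h1 : ∑ p ∈ S, a p.1 p.2 * x ^ p.1 * y ^ p.2 * z ^ (4 - p.1 - p.2)
        * (0:ℂ) ^ (p.1 + 2 * p.2 - 4) = 0 := by
      refine Finset.sum_eq_zero ?_
      rintro ⟨i, j⟩ hp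
      simp only [hS, Finset.mem_filter, Finset.mem_product, Finset.mem_range] at hp
      obtain ⟨⟨hi, hj⟩, hij1, hij2⟩ := hp
      rw [show ((i,j).1 + 2 * (i,j).2 - 4) = i + 2 * j - 4 from rfl,
        zero_pow (show i + 2 * j - 4 ≠ 0 by omega), mul_zero]
    have h2 : ∑ m ∈ Ψ.support, Ψ.coeff m *
        (expMap18 m).prod (fun i e => (![x, y, z, (0:ℂ)] i) ^ e) = 0 := by
      refine Finset.sum_eq_zero ?_
      intro m hm
      have h4 := hΨ m hm
      rw [Finsupp.prod_fintype _ _ (fun i => pow_zero _), Fin.prod_univ_four]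
      have hexp : ∀ i : Fin 4, expMap18 m i = ![m 0, m 1, m 2, 5 + m 1 + 5 * m 3 - m 2] i :=
        fun i => rfl
      simp only [hexp, Matrix.cons_val_zero, Matrix.cons_val_one, Matrix.head_cons,
        Matrix.cons_val_two, Matrix.tail_cons, Matrix.cons_val_three]
      rw [zero_pow (by omega)]
      ring
    rw [h1, h2]
    simp [mul_comm]
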